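/- Let D ⊂ ℝ^d be a compact set with finite positive Lebesgue measure |D|, J = [0,T] with T > 0, k ∈ L²(D×D), f ∈ BC¹(ℝ), g ∈ C⁰(J, L²(D)), and v ∈ L²(D). Then there exists a unique u ∈ C¹(J, L²(D)) with u(0) = v and u'(t) = −u(t) + H(k)(f∘u(t)) + g(t) for all t ∈ J. Moreover, with κ_D = max(1, √|D|), κ = ‖g‖_{C⁰(J,L²(D))} + κ_D ‖k‖_{L²(D×D)} ‖f‖_∞, and M₀ = 2 max(‖v‖₂, κ), one has the time-uniform bounds ‖u(t)‖₂ ≤ M₀ for all t ∈ J and ‖u‖_{C¹(J,L²(D))} ≤ 2 M₀ + κ. -/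

import Mathlib

open MeasureTheory Set
open scoped ENNReal NNReal

theorem picard_global {E : Type*} [NormedAddCommGroup E] [NormedSpace ℝ E] [CompleteSpace E]
    {T : ℝ} (hT : 0 < T) (G : ℝ → E → E) {L : ℝ} (hL : 0 ≤ L)
    (hGL : ∀ t a b, ‖G t a - G t b‖ ≤ L * ‖a - b‖)
    (hGc : ∀ c : ℝ → E, Continuous c → Continuous fun s => G s (c s))
    (v : E) :
    ∃ u : C(Set.Icc (0:ℝ) T, E),
      (u (Set.projIcc 0 T hT.le 0) = v ∧
        ∀ t ∈ Set.Icc (0:ℝ) T,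
          HasDerivWithinAt (fun s : ℝ => u (Set.projIcc 0 T hT.le s))
            (G t (u (Set.projIcc 0 T hT.le t))) (Set.Icc (0:ℝ) T) t) ∧
      ∀ u₂ : C(Set.Icc (0:ℝ) T, E),
        (u₂ (Set.projIcc 0 T hT.le 0) = v ∧
          ∀ t ∈ Set.Icc (0:ℝ) T,
            HasDerivWithinAt (fun s : ℝ => u₂ (Set.projIcc 0 T hT.le s))
              (G t (u₂ (Set.projIcc 0 T hT.le t))) (Set.Icc (0:ℝ) T) t) → u₂ = u := by
  set pr : ℝ → Set.Icc (0:ℝ) T := Set.projIcc 0 T hT.le with hpr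
  have hprc : Continuous pr := continuous_projIcc
  have hval : ∀ s : ℝ, s ∈ Set.Icc (0:ℝ) T → ((pr s : ℝ)) = s := by
    intro s hs
    rw [hpr, Set.coe_projIcc, min_eq_right hs.2, max_eq_right hs.1]
  have hcoe : ∀ t : Set.Icc (0:ℝ) T, pr (t:ℝ) = t := fun t => by
    rw [hpr]; exact Set.projIcc_val hT.le t
  let P : C(Set.Icc (0:ℝ) T, E) → ℝ → E := fun u s => G s (u (pr s))
  have hPc : ∀ u : C(Set.Icc (0:ℝ) T, E), Continuous (P u) := fun u =>
    hGc _ (u.continuous.comp hprc)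
  let Φ : C(Set.Icc (0:ℝ) T, E) → C(Set.Icc (0:ℝ) T, E) := fun u =>
    ⟨fun t => v + ∫ s in (0:ℝ)..(t:ℝ), P u s,
      continuous_const.add
        ((intervalIntegral.continuous_primitive
            (fun a b => (hPc u).intervalIntegrable a b) 0).comp continuous_subtype_val)⟩
  have hΦ : ∀ (u : C(Set.Icc (0:ℝ) T, E)) (t : Set.Icc (0:ℝ) T),
      Φ u t = v + ∫ s in (0:ℝ)..(t:ℝ), P u s := fun _ _ => rfl
  -- key iterate estimate
  have key : ∀ n : ℕ, ∀ u w : C(Set.Icc (0:ℝ) T, E), ∀ t : Set.Icc (0:ℝ) T,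
      ‖(Φ^[n] u) t - (Φ^[n] w) t‖ ≤ L ^ n * (t:ℝ) ^ n / n.factorial * dist u w := by
    intro n
    induction n with
    | zero =>
      intro u w t
      simpa [dist_eq_norm] using ContinuousMap.dist_apply_le_dist (f := u) (g := w) t
    | succ n ih =>
      intro u w t
      rw [Function.iterate_succ_apply', Function.iterate_succ_apply']
      set a := Φ^[n] u with ha
      set b := Φ^[n] w with hb
      have ht0 : 0 ≤ (t:ℝ) := t.2.1
      have htT : (t:ℝ) ≤ T := t.2.2
      have hia : IntervalIntegrable (P a) volume 0 (t:ℝ) := (hPc a).intervalIntegrable _ _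
      have hib : IntervalIntegrable (P b) volume 0 (t:ℝ) := (hPc b).intervalIntegrable _ _
      have hnorm : IntervalIntegrable (fun s => ‖P a s - P b s‖) volume 0 (t:ℝ) :=
        ((hPc a).sub (hPc b)).norm.intervalIntegrable _ _
      have hpoly : IntervalIntegrable
          (fun s : ℝ => L * (L ^ n * s ^ n / n.factorial * dist u w)) volume 0 (t:ℝ) := by
        apply Continuous.intervalIntegrable
        fun_prop
      calc ‖Φ a t - Φ b t‖ = ‖∫ s in (0:ℝ)..(t:ℝ), (P a s - P b s)‖ := by
            rw [hΦ, hΦ, add_sub_add_left_eq_sub, intervalIntegral.integral_sub hia hib]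
        _ ≤ ∫ s in (0:ℝ)..(t:ℝ), ‖P a s - P b s‖ :=
            intervalIntegral.norm_integral_le_integral_norm ht0
        _ ≤ ∫ s in (0:ℝ)..(t:ℝ), L * (L ^ n * s ^ n / n.factorial * dist u w) := by
            apply intervalIntegral.integral_mono_on ht0 hnorm hpoly
            intro s hs
            have hsJ : s ∈ Set.Icc (0:ℝ) T := ⟨hs.1, hs.2.trans htT⟩
            have h3 := ih u w (pr s)
            rw [hval s hsJ] at h3
            calc ‖P a s - P b s‖ ≤ L * ‖a (pr s) - b (pr s)‖ := hGL s _ _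
              _ ≤ L * (L ^ n * s ^ n / n.factorial * dist u w) :=
                  mul_le_mul_of_nonneg_left h3 hL
        _ = L ^ (n+1) * (t:ℝ) ^ (n+1) / (n+1).factorial * dist u w := by
            have hfe : (fun s : ℝ => L * (L ^ n * s ^ n / n.factorial * dist u w)) =
                fun s : ℝ => (L * L ^ n / n.factorial * dist u w) * s ^ n := by
              funext s; ring
            rw [hfe, intervalIntegral.integral_const_mul, integral_pow]
            have hfac : ((n+1).factorial : ℝ) = (n+1) * n.factorial := by
              rw [Nat.factorial_succ]; push_cast; ring
            have hnf : (n.factorial : ℝ) ≠ 0 := Nat.cast_ne_zero.2 n.factorial_ne_zero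
            rw [hfac]
            field_simp
            ring
  have key' : ∀ n : ℕ, ∀ u w : C(Set.Icc (0:ℝ) T, E),
      dist (Φ^[n] u) (Φ^[n] w) ≤ L ^ n * T ^ n / n.factorial * dist u w := by
    intro n u w
    rw [ContinuousMap.dist_le (by positivity)]
    intro t
    rw [dist_eq_norm]
    refine (key n u w t).trans ?_
    have h1 : (t:ℝ) ^ n ≤ T ^ n := pow_le_pow_left₀ t.2.1 t.2.2 n
    have h2 : (0:ℝ) ≤ dist u w := dist_nonneg
    gcongr
  obtain ⟨n, hn⟩ : ∃ n : ℕ, L ^ n * T ^ n / n.factorial < 1 := by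
    have h := FloorSemiring.tendsto_pow_div_factorial_atTop (K := ℝ) (L * T)
    obtain ⟨n, hn⟩ := (h.eventually_lt_const (by norm_num : (0:ℝ) < 1)).exists
    exact ⟨n, by rwa [mul_pow] at hn⟩
  set Kc : NNReal := (L ^ n * T ^ n / n.factorial).toNNReal with hKc
  have hK1 : Kc < 1 := by
    have h1 : ((Kc : ℝ)) < 1 := by
      rw [hKc, Real.coe_toNNReal']
      exact max_lt hn one_pos
    exact_mod_cast h1
  have hC : ContractingWith Kc (Φ^[n]) := by
    constructor
    · exact hK1
    · apply LipschitzWith.of_dist_le_mul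
      intro u w
      refine (key' n u w).trans ?_
      apply mul_le_mul_of_nonneg_right _ dist_nonneg
      exact Real.le_coe_toNNReal _
  haveI : Nonempty C(Set.Icc (0:ℝ) T, E) := ⟨0⟩
  set u := ContractingWith.fixedPoint (Φ^[n]) hC with hu
  have hufix : Φ u = u := hC.isFixedPt_fixedPoint_iterate
  have hueq : ∀ t : Set.Icc (0:ℝ) T, u t = v + ∫ s in (0:ℝ)..(t:ℝ), P u s := by
    intro t
    conv_lhs => rw [← hufix]
    exact hΦ u t
  have h0J : (0:ℝ) ∈ Set.Icc (0:ℝ) T := Set.left_mem_Icc.2 hT.le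
  refine ⟨u, ⟨?_, ?_⟩, ?_⟩
  · rw [hueq (pr 0), hval 0 h0J, intervalIntegral.integral_same, add_zero]
  · intro t ht
    have hq : HasDerivAt (fun s : ℝ => v + ∫ τ in (0:ℝ)..s, P u τ) (P u t) t :=
      (((hPc u).integral_hasStrictDerivAt 0 t).hasDerivAt).const_add v
    have h2 := hq.hasDerivWithinAt (s := Set.Icc (0:ℝ) T)
    refine h2.congr (fun y hy => ?_) ?_
    · rw [hueq (pr y), hval y hy]
    · rw [hueq (pr t), hval t ht]
  · rintro u₂ ⟨h0, hd⟩
    have hfix2 : Function.IsFixedPt Φ u₂ := by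
      show Φ u₂ = u₂
      ext t
      rw [hΦ]
      have ht0 : 0 ≤ (t:ℝ) := t.2.1
      have hcont : ContinuousOn (fun s : ℝ => u₂ (pr s)) (Set.Icc 0 (t:ℝ)) :=
        (u₂.continuous.comp hprc).continuousOn
      have hderiv : ∀ x ∈ Set.Ioo (0:ℝ) (t:ℝ),
          HasDerivWithinAt (fun s : ℝ => u₂ (pr s)) (P u₂ x) (Set.Ioi x) x := by
        intro x hx
        have hxJ : x ∈ Set.Icc (0:ℝ) T := ⟨hx.1.le, hx.2.le.trans t.2.2⟩
        have h := hd x hxJ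
        have hx' : x ∈ Set.Ioo (0:ℝ) T := ⟨hx.1, lt_of_lt_of_le hx.2 t.2.2⟩
        exact (h.hasDerivAt (Icc_mem_nhds hx'.1 hx'.2)).hasDerivWithinAt
      have hint : IntervalIntegrable (P u₂) volume 0 (t:ℝ) :=
        (hPc u₂).intervalIntegrable _ _
      have heq := intervalIntegral.integral_eq_sub_of_hasDeriv_right_of_le ht0 hcont hderiv hint
      rw [heq, hcoe t, h0]
      abel
    exact hC.fixedPoint_unique (hfix2.iterate n)

theorem hs_bound {α : Type*} [MeasurableSpace α] {μ : Measure α} [SFinite μ]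
    (k : Lp ℝ 2 (μ.prod μ)) (w Hw : Lp ℝ 2 μ)
    (h : (Hw : α → ℝ) =ᵐ[μ] fun x => ∫ y, k (x, y) * w y ∂μ) :
    ‖Hw‖ ≤ ‖k‖ * ‖w‖ := by
  have hKm : AEStronglyMeasurable (k : α × α → ℝ) (μ.prod μ) := Lp.aestronglyMeasurable k
  have hwm : AEStronglyMeasurable (w : α → ℝ) μ := Lp.aestronglyMeasurable w
  set K2 : α × α → ℝ≥0∞ := fun z => (‖(k : α × α → ℝ) z‖₊ : ℝ≥0∞) ^ (2:ℝ) with hK2def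
  have hK2m : AEMeasurable K2 (μ.prod μ) :=
    (ENNReal.continuous_rpow_const.measurable).comp_aemeasurable hKm.enorm
  set Nw : ℝ≥0∞ := ∫⁻ y, (‖(w : α → ℝ) y‖₊ : ℝ≥0∞) ^ (2:ℝ) ∂μ with hNwdef
  set A : α → ℝ≥0∞ := fun x => ∫⁻ y, K2 (x, y) ∂μ with hAdef
  have hAm : AEMeasurable A μ := by
    refine ⟨fun x => ∫⁻ y, hK2m.mk K2 (x, y) ∂μ, hK2m.measurable_mk.lintegral_prod_right', ?_⟩
    filter_upwards [Measure.ae_ae_of_ae_prod hK2m.ae_eq_mk] with x hx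
    exact lintegral_congr_ae hx
  have hCS : ∀ᵐ x ∂μ, (‖(Hw : α → ℝ) x‖₊ : ℝ≥0∞) ^ (2:ℝ) ≤ A x * Nw := by
    filter_upwards [h, hKm.prodMk_left] with x hx hxm
    have conj : Real.HolderConjugate 2 2 := Real.holderConjugate_iff.mpr ⟨one_lt_two, by norm_num⟩
    have h1 : (‖(Hw : α → ℝ) x‖₊ : ℝ≥0∞) ≤ (A x) ^ (1/2:ℝ) * Nw ^ (1/2:ℝ) := by
      rw [hx]
      calc (‖∫ y, (k : α × α → ℝ) (x, y) * (w : α → ℝ) y ∂μ‖₊ : ℝ≥0∞)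
          ≤ ∫⁻ y, ‖(k : α × α → ℝ) (x, y) * (w : α → ℝ) y‖₊ ∂μ :=
            enorm_integral_le_lintegral_enorm _
        _ = ∫⁻ y, (fun y => (‖(k : α × α → ℝ) (x, y)‖₊ : ℝ≥0∞)) y *
              (fun y => (‖(w : α → ℝ) y‖₊ : ℝ≥0∞)) y ∂μ := by
            simp [nnnorm_mul, ENNReal.coe_mul]
        _ ≤ (∫⁻ y, (‖(k : α × α → ℝ) (x, y)‖₊ : ℝ≥0∞) ^ (2:ℝ) ∂μ) ^ (1/2:ℝ) *
              (∫⁻ y, (‖(w : α → ℝ) y‖₊ : ℝ≥0∞) ^ (2:ℝ) ∂μ) ^ (1/2:ℝ) :=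
            ENNReal.lintegral_mul_le_Lp_mul_Lq μ conj hxm.enorm hwm.enorm
    calc (‖(Hw : α → ℝ) x‖₊ : ℝ≥0∞) ^ (2:ℝ) ≤ ((A x) ^ (1/2:ℝ) * Nw ^ (1/2:ℝ)) ^ (2:ℝ) :=
          ENNReal.rpow_le_rpow h1 (by norm_num)
      _ = A x * Nw := by
          rw [ENNReal.mul_rpow_of_nonneg _ _ (by norm_num), ← ENNReal.rpow_mul,
            ← ENNReal.rpow_mul]
          norm_num
  rw [Lp.norm_def, Lp.norm_def, Lp.norm_def, ← ENNReal.toReal_mul]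
  apply ENNReal.toReal_mono (ENNReal.mul_ne_top (Lp.eLpNorm_lt_top k).ne (Lp.eLpNorm_lt_top w).ne)
  rw [eLpNorm_eq_lintegral_rpow_enorm_toReal (by norm_num) (by norm_num),
    eLpNorm_eq_lintegral_rpow_enorm_toReal (by norm_num) (by norm_num),
    eLpNorm_eq_lintegral_rpow_enorm_toReal (by norm_num) (by norm_num)]
  simp only [ENNReal.toReal_ofNat]
  rw [← ENNReal.mul_rpow_of_nonneg _ _ (by norm_num : (0:ℝ) ≤ 1/2)]
  apply ENNReal.rpow_le_rpow _ (by norm_num)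
  calc ∫⁻ x, (‖(Hw : α → ℝ) x‖₊ : ℝ≥0∞) ^ (2:ℝ) ∂μ ≤ ∫⁻ x, A x * Nw ∂μ :=
        lintegral_mono_ae hCS
    _ = (∫⁻ x, A x ∂μ) * Nw := lintegral_mul_const'' Nw hAm
    _ = (∫⁻ z, K2 z ∂(μ.prod μ)) * Nw := by rw [lintegral_prod _ hK2m]

set_option maxHeartbeats 2000000 in
/-- Well-posedness of the nonlinear neural field on `L²(D)`: there is a
unique `u ∈ C¹(J, L²(D))` with `u(0) = v` and `u' = −u + H(k)(f∘u) + g`, and with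
`κ = ‖g‖_{C⁰} + κ_D ‖k‖ ‖f‖_∞` and `M₀ = 2 max(‖v‖₂, κ)` it satisfies the time-uniform
bounds `‖u(t)‖₂ ≤ M₀` and `‖u‖_{C¹} ≤ 2M₀ + κ`. -/
theorem stmt11 (d : ℕ) (D : Set (EuclideanSpace ℝ (Fin d)))
    (hD : IsCompact D) (hpos : 0 < volume D) (hfin : volume D < ⊤)
    (T : ℝ) (hT : 0 < T)
    (k : Lp ℝ 2 ((volume.restrict D).prod (volume.restrict D)))
    (Hk : Lp ℝ 2 (volume.restrict D) →L[ℝ] Lp ℝ 2 (volume.restrict D))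
    (hHk : ∀ v : Lp ℝ 2 (volume.restrict D),
      (Hk v : _ → ℝ) =ᵐ[volume.restrict D]
        fun x => ∫ x', k (x, x') * v x' ∂(volume.restrict D))
    (f : ℝ → ℝ) (hf : ContDiff ℝ 1 f)
    (hfb : ∃ C, ∀ s : ℝ, |f s| ≤ C) (hfb' : ∃ C, ∀ s : ℝ, |deriv f s| ≤ C)
    (F : Lp ℝ 2 (volume.restrict D) → Lp ℝ 2 (volume.restrict D))
    (hF : ∀ u : Lp ℝ 2 (volume.restrict D),
      (F u : _ → ℝ) =ᵐ[volume.restrict D] fun x => f (u x))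
    (g : C(Set.Icc (0:ℝ) T, Lp ℝ 2 (volume.restrict D)))
    (v : Lp ℝ 2 (volume.restrict D)) :
    ∃ u : C(Set.Icc (0:ℝ) T, Lp ℝ 2 (volume.restrict D)),
      (u (Set.projIcc 0 T hT.le 0) = v ∧
        ∀ t ∈ Set.Icc (0:ℝ) T,
          HasDerivWithinAt (fun s : ℝ => u (Set.projIcc 0 T hT.le s))
            (-(u (Set.projIcc 0 T hT.le t)) + Hk (F (u (Set.projIcc 0 T hT.le t))) +
              g (Set.projIcc 0 T hT.le t))
            (Set.Icc (0:ℝ) T) t) ∧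
      (∀ t : Set.Icc (0:ℝ) T,
        ‖u t‖ ≤ 2 * max ‖v‖ (‖g‖ + max 1 (Real.sqrt (volume D).toReal) * ‖k‖ * (⨆ s : ℝ, |f s|))) ∧
      (∀ s t : Set.Icc (0:ℝ) T,
        ‖u s‖ + ‖-(u t) + Hk (F (u t)) + g t‖ ≤
          2 * (2 * max ‖v‖ (‖g‖ + max 1 (Real.sqrt (volume D).toReal) * ‖k‖ * (⨆ s : ℝ, |f s|))) +
            (‖g‖ + max 1 (Real.sqrt (volume D).toReal) * ‖k‖ * (⨆ s : ℝ, |f s|))) ∧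
      (∀ u₂ : C(Set.Icc (0:ℝ) T, Lp ℝ 2 (volume.restrict D)),
        (u₂ (Set.projIcc 0 T hT.le 0) = v ∧
          ∀ t ∈ Set.Icc (0:ℝ) T,
            HasDerivWithinAt (fun s : ℝ => u₂ (Set.projIcc 0 T hT.le s))
              (-(u₂ (Set.projIcc 0 T hT.le t)) + Hk (F (u₂ (Set.projIcc 0 T hT.le t))) +
                g (Set.projIcc 0 T hT.le t))
              (Set.Icc (0:ℝ) T) t) → u₂ = u) := by
  classical
  haveI hfinμ : IsFiniteMeasure (volume.restrict D) :=
    ⟨by rw [Measure.restrict_apply_univ]; exact hfin⟩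
  set S := ⨆ s : ℝ, |f s| with hSdef
  obtain ⟨Cb, hCb⟩ := hfb
  have hbdd : BddAbove (Set.range fun s : ℝ => |f s|) := ⟨Cb, by rintro x ⟨s, rfl⟩; exact hCb s⟩
  have hfS : ∀ s : ℝ, |f s| ≤ S := fun s => le_ciSup hbdd s
  have hS0 : (0:ℝ) ≤ S := (abs_nonneg _).trans (hfS 0)
  obtain ⟨Cf, hCf⟩ := hfb'
  have hCf0 : (0:ℝ) ≤ Cf := (abs_nonneg _).trans (hCf 0)
  have hflip : ∀ a b : ℝ, |f a - f b| ≤ Cf * |a - b| := by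
    intro a b
    have h := Convex.norm_image_sub_le_of_norm_deriv_le (f := f) (s := Set.univ)
      (fun x _ => (hf.differentiable one_ne_zero).differentiableAt)
      (fun x _ => hCf x) convex_univ (Set.mem_univ b) (Set.mem_univ a)
    simpa [Real.norm_eq_abs] using h
  -- F is Lipschitz
  have hFlip : ∀ a b : Lp ℝ 2 (volume.restrict D), ‖F a - F b‖ ≤ Cf * ‖a - b‖ := by
    intro a b
    have hae : ∀ᵐ x ∂(volume.restrict D), ‖(F a - F b : Lp ℝ 2 (volume.restrict D)) x‖ ≤ ‖(Cf • (a - b) : Lp ℝ 2 (volume.restrict D)) x‖ := by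
      filter_upwards [Lp.coeFn_sub (F a) (F b), hF a, hF b,
        Lp.coeFn_smul Cf (a - b), Lp.coeFn_sub a b] with x h1 h2 h3 h4
      intro h5
      rw [h1, Pi.sub_apply, h2, h3, h4, Pi.smul_apply, h5, Pi.sub_apply]
      simp only [Real.norm_eq_abs, smul_eq_mul, abs_mul]
      exact (hflip _ _).trans (mul_le_mul_of_nonneg_right (le_abs_self Cf) (abs_nonneg _))
    have h6 : ‖F a - F b‖ ≤ ‖(Cf • (a - b) : Lp ℝ 2 (volume.restrict D))‖ := by
      rw [Lp.norm_def, Lp.norm_def]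
      exact ENNReal.toReal_mono (Lp.eLpNorm_lt_top _).ne (eLpNorm_mono_ae hae)
    refine h6.trans ?_
    rw [norm_smul, Real.norm_eq_abs, abs_of_nonneg hCf0]
  have hFcont : Continuous F := by
    refine LipschitzWith.continuous (K := Cf.toNNReal) (LipschitzWith.of_dist_le_mul ?_)
    intro a b
    rw [dist_eq_norm, dist_eq_norm]
    exact (hFlip a b).trans
      (mul_le_mul_of_nonneg_right (Real.le_coe_toNNReal Cf) (norm_nonneg _))
  -- bound on F
  have hμ0 : volume.restrict D ≠ 0 := by
    rw [← Measure.measure_univ_ne_zero, Measure.restrict_apply_univ]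
    exact hpos.ne'
  have hFb : ∀ a : Lp ℝ 2 (volume.restrict D), ‖F a‖ ≤ S * Real.sqrt (volume D).toReal := by
    intro a
    have hae : ∀ᵐ x ∂(volume.restrict D), ‖(F a : _ → ℝ) x‖ ≤ ‖S‖ := by
      filter_upwards [hF a] with x hx
      rw [hx]
      simpa [Real.norm_eq_abs, abs_of_nonneg hS0] using hfS _
    have h1 : eLpNorm (F a : _ → ℝ) 2 (volume.restrict D) ≤ eLpNorm (fun _ => S) 2 (volume.restrict D) := eLpNorm_mono_ae hae
    rw [eLpNorm_const S (by norm_num) hμ0] at h1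
    have hμu : (volume.restrict D) Set.univ = volume D := Measure.restrict_apply_univ _
    rw [hμu] at h1
    have hne : ((‖S‖₊ : ℝ≥0∞) * (volume D) ^ (1/(2:ℝ≥0∞).toReal)) ≠ ⊤ :=
      ENNReal.mul_ne_top ENNReal.coe_ne_top
        (ENNReal.rpow_ne_top_of_nonneg (by norm_num) hfin.ne)
    have h2 := ENNReal.toReal_mono hne h1
    rw [Lp.norm_def]
    refine h2.trans_eq ?_
    rw [ENNReal.toReal_mul, ENNReal.coe_toReal, coe_nnnorm, Real.norm_eq_abs,
      abs_of_nonneg hS0, ← ENNReal.toReal_rpow, Real.sqrt_eq_rpow]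
    norm_num
  -- Hilbert-Schmidt bound
  have hHS : ∀ w : Lp ℝ 2 (volume.restrict D), ‖Hk w‖ ≤ ‖k‖ * ‖w‖ := fun w => hs_bound k w (Hk w) (hHk w)
  have hHkFb : ∀ a : Lp ℝ 2 (volume.restrict D), ‖Hk (F a)‖ ≤ max 1 (Real.sqrt (volume D).toReal) * ‖k‖ * S := by
    intro a
    have h1 := (hHS (F a)).trans (mul_le_mul_of_nonneg_left (hFb a) (norm_nonneg k))
    have h2 : Real.sqrt (volume D).toReal ≤ max 1 (Real.sqrt (volume D).toReal) :=
      le_max_right _ _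
    nlinarith [norm_nonneg k, hS0, mul_nonneg (mul_nonneg (sub_nonneg.mpr h2) (norm_nonneg k)) hS0]
  set κ := ‖g‖ + max 1 (Real.sqrt (volume D).toReal) * ‖k‖ * S with hκdef
  have hmax1 : (1:ℝ) ≤ max 1 (Real.sqrt (volume D).toReal) := le_max_left _ _
  have hκ0 : 0 ≤ κ := by
    have h1 : 0 ≤ max 1 (Real.sqrt (volume D).toReal) * ‖k‖ * S :=
      mul_nonneg (mul_nonneg (le_trans zero_le_one hmax1) (norm_nonneg k)) hS0
    rw [hκdef]
    linarith [norm_nonneg g]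
  -- the vector field
  set G : ℝ → Lp ℝ 2 (volume.restrict D) → Lp ℝ 2 (volume.restrict D) :=
    fun t x => -x + Hk (F x) + g (Set.projIcc 0 T hT.le t) with hGdef
  set L := 1 + ‖Hk‖ * Cf with hLdef
  have hL0 : 0 ≤ L := by positivity
  have hGL : ∀ t (a b : Lp ℝ 2 (volume.restrict D)), ‖G t a - G t b‖ ≤ L * ‖a - b‖ := by
    intro t a b
    have he : G t a - G t b = -(a - b) + (Hk (F a) - Hk (F b)) := by
      show (-a + Hk (F a) + g (Set.projIcc 0 T hT.le t)) - (-b + Hk (F b) + g (Set.projIcc 0 T hT.le t)) = _; abel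
    rw [he]
    calc ‖-(a - b) + (Hk (F a) - Hk (F b))‖ ≤ ‖-(a - b)‖ + ‖Hk (F a) - Hk (F b)‖ :=
          norm_add_le _ _
      _ ≤ ‖a - b‖ + ‖Hk‖ * (Cf * ‖a - b‖) := by
          rw [norm_neg]
          refine add_le_add le_rfl ?_
          rw [← map_sub]
          exact (Hk.le_opNorm _).trans
            (mul_le_mul_of_nonneg_left (hFlip a b) (norm_nonneg _))
      _ = L * ‖a - b‖ := by rw [hLdef]; ring
  have hGc : ∀ c : ℝ → Lp ℝ 2 (volume.restrict D), Continuous c → Continuous fun s => G s (c s) := by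
    intro c hc
    exact ((hc.neg).add (Hk.continuous.comp (hFcont.comp hc))).add
      (g.continuous.comp continuous_projIcc)
  obtain ⟨u, ⟨hu0, hud⟩, huniq⟩ := picard_global hT G hL0 hGL hGc v
  have hud' : ∀ t ∈ Set.Icc (0:ℝ) T,
      HasDerivWithinAt (fun s : ℝ => u (Set.projIcc 0 T hT.le s))
        (-(u (Set.projIcc 0 T hT.le t)) + Hk (F (u (Set.projIcc 0 T hT.le t))) +
          g (Set.projIcc 0 T hT.le t)) (Set.Icc (0:ℝ) T) t := fun t ht => hud t ht
  -- Gronwall-type bound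
  have hval : ∀ s : ℝ, s ∈ Set.Icc (0:ℝ) T → ((Set.projIcc 0 T hT.le s : ℝ)) = s := by
    intro s hs
    rw [Set.coe_projIcc, min_eq_right hs.2, max_eq_right hs.1]
  have hcoe : ∀ t : Set.Icc (0:ℝ) T, Set.projIcc 0 T hT.le (t:ℝ) = t := fun t =>
    Set.projIcc_val hT.le t
  have hGb : ∀ x : Set.Icc (0:ℝ) T, ‖Hk (F (u x)) + g x‖ ≤ κ := by
    intro x
    have h1 := hHkFb (u x)
    have h2 := ContinuousMap.norm_coe_le_norm g x
    calc ‖Hk (F (u x)) + g x‖ ≤ ‖Hk (F (u x))‖ + ‖g x‖ := norm_add_le _ _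
      _ ≤ κ := by rw [hκdef]; linarith
  set M := max ‖v‖ κ with hMdef
  have hM0 : (0:ℝ) ≤ M := (norm_nonneg v).trans (le_max_left _ _)
  have key : ∀ ⦃x : ℝ⦄, x ∈ Set.Icc (0:ℝ) T →
      ‖Real.exp x • u (Set.projIcc 0 T hT.le x)‖ ≤ ‖v‖ + κ * (Real.exp x - 1) := by
    apply image_norm_le_of_norm_deriv_right_le_deriv_boundary
      (f := fun s : ℝ => Real.exp s • u (Set.projIcc 0 T hT.le s))
      (f' := fun s : ℝ => Real.exp s •
        (Hk (F (u (Set.projIcc 0 T hT.le s))) + g (Set.projIcc 0 T hT.le s)))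
      (B := fun s : ℝ => ‖v‖ + κ * (Real.exp s - 1)) (B' := fun s : ℝ => κ * Real.exp s)
    · exact (Real.continuous_exp.smul (u.continuous.comp continuous_projIcc)).continuousOn
    · intro x hx
      have hxI : x ∈ Set.Icc (0:ℝ) T := Set.mem_of_mem_of_subset hx Set.Ico_subset_Icc_self
      have hmem : Set.Icc (0:ℝ) T ∈ nhdsWithin x (Set.Ici x) := Icc_mem_nhdsGE_of_mem hx
      have hd2 := (hud' x hxI).mono_of_mem_nhdsWithin hmem
      have hexp : HasDerivWithinAt Real.exp (Real.exp x) (Set.Ici x) x :=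
        (Real.hasDerivAt_exp x).hasDerivWithinAt
      have h3 := hexp.smul hd2
      convert h3 using 1
      · rfl
      rw [← smul_add]
      congr 1
      abel_nf
    · rw [Real.exp_zero, one_smul, hu0]; simp
    · intro x
      exact (((Real.hasDerivAt_exp x).sub_const 1).const_mul κ).const_add ‖v‖
    · intro x hx
      rw [norm_smul, Real.norm_eq_abs, abs_of_pos (Real.exp_pos x), mul_comm κ]
      exact mul_le_mul_of_nonneg_left (hGb _) (Real.exp_pos x).le
  have hbound : ∀ t : Set.Icc (0:ℝ) T, ‖u t‖ ≤ M := by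
    intro t
    have h1 := key t.2
    rw [hcoe t, norm_smul, Real.norm_eq_abs, abs_of_pos (Real.exp_pos _)] at h1
    have he1 : 1 ≤ Real.exp (t:ℝ) := Real.one_le_exp t.2.1
    have hv : ‖v‖ ≤ M := le_max_left _ _
    have hκM : κ ≤ M := le_max_right _ _
    nlinarith [Real.exp_pos (t:ℝ), norm_nonneg (u t)]
  refine ⟨u, ⟨hu0, hud'⟩, ?_, ?_, huniq⟩
  · intro t
    have := hbound t
    linarith
  · intro s t
    have h2 : ‖-(u t) + Hk (F (u t)) + g t‖ ≤ M + κ := by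
      have h3 : -(u t) + Hk (F (u t)) + g t = -(u t) + (Hk (F (u t)) + g t) := by abel
      rw [h3]
      calc ‖-(u t) + (Hk (F (u t)) + g t)‖ ≤ ‖-(u t)‖ + ‖Hk (F (u t)) + g t‖ := norm_add_le _ _
        _ ≤ M + κ := by rw [norm_neg]; exact add_le_add (hbound t) (hGb t)
    have h4 := hbound s
    linarith
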